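/- Let (N,v) be a balanced TU game with veto player a. Then the least core value ε* = max{ ε : C_ε ≠ ∅ } equals min{ (v(N) − v(S)) / (|N| − |S| + 1) : S proper coalition containing a }. -/

import Mathlib

open Finset

def epsCore {ι : Type*} [Fintype ι] [DecidableEq ι] (v : Finset ι → ℝ) (ε : ℝ) :
    Set (ι → ℝ) :=
  {x | (∑ i, x i) = v Finset.univ ∧
    ∀ S : Finset ι, S.Nonempty → S ≠ Finset.univ → v S + ε ≤ ∑ i ∈ S, x i}

noncomputable def lcv {ι : Type*} [Fintype ι] [DecidableEq ι] (v : Finset ι → ℝ) : ℝ :=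
  sSup {ε : ℝ | (epsCore v ε).Nonempty}

def Pa {ι : Type*} [Fintype ι] [DecidableEq ι] (a : ι) : Finset (Finset ι) :=
  Finset.univ.filter (fun S => a ∈ S ∧ S ≠ Finset.univ)

noncomputable def excessRatio {ι : Type*} [Fintype ι] [DecidableEq ι]
    (v : Finset ι → ℝ) (S : Finset ι) : ℝ :=
  (v Finset.univ - v S) / ((Fintype.card ι : ℝ) - (S.card : ℝ) + 1)

theorem stmt4 {ι : Type*} [Fintype ι] [DecidableEq ι] (v : Finset ι → ℝ) (a : ι)
    (hcard : 2 ≤ Fintype.card ι)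
    (hempty : v ∅ = 0)
    (hveto : ∀ S : Finset ι, a ∉ S → v S = 0)
    (hbal : (epsCore v 0).Nonempty)
    (hPa : (Pa a).Nonempty) :
    lcv v = (Pa a).inf' hPa (excessRatio v) := by
  set n := Fintype.card ι with hn
  set ε := (Pa a).inf' hPa (excessRatio v) with hεdef
  -- Key upper bound lemma
  have keyA : ∀ ε' : ℝ, (epsCore v ε').Nonempty → ε' ≤ ε := by
    rintro ε' ⟨x, hsum, hineq⟩
    rw [hεdef]
    apply Finset.le_inf'
    intro S hS
    rw [Pa, mem_filter] at hS
    obtain ⟨-, haS, hSne⟩ := hS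
    have hSnon : S.Nonempty := ⟨a, haS⟩
    have hcardS : S.card < n := by
      have : S ⊂ Finset.univ := Finset.ssubset_univ_iff.mpr hSne
      simpa [hn] using Finset.card_lt_card this
    have hd : (0:ℝ) < (n:ℝ) - (S.card:ℝ) + 1 := by
      have : (S.card : ℝ) < (n : ℝ) := by exact_mod_cast hcardS
      linarith
    -- each i outside S gets at least ε'
    have hxi : ∀ i ∈ Sᶜ, ε' ≤ x i := by
      intro i hi
      rw [mem_compl] at hi
      have hia : i ≠ a := fun h => hi (h ▸ haS)
      have h1 : ({i} : Finset ι) ≠ Finset.univ := by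
        intro h
        have := Finset.card_univ (α := ι)
        rw [← h, Finset.card_singleton] at this
        omega
      have := hineq {i} (Finset.singleton_nonempty i) h1
      rw [hveto {i} (by simp [hia.symm]), Finset.sum_singleton] at this
      linarith
    have hsumc : (Sᶜ.card : ℝ) * ε' ≤ ∑ i ∈ Sᶜ, x i := by
      have := Finset.card_nsmul_le_sum Sᶜ x ε' hxi
      simpa [nsmul_eq_mul] using this
    have hcc : (Sᶜ.card : ℝ) = (n:ℝ) - (S.card:ℝ) := by
      rw [Finset.card_compl, ← hn]
      push_cast [Nat.cast_sub hcardS.le]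
      ring
    have hsplit : (∑ i ∈ S, x i) + ∑ i ∈ Sᶜ, x i = v Finset.univ := by
      rw [Finset.sum_add_sum_compl]; exact hsum
    have hS' := hineq S hSnon hSne
    rw [excessRatio, le_div_iff₀ hd]
    have hexp : ε' * ((n:ℝ) - (S.card:ℝ) + 1) = ((n:ℝ) - (S.card:ℝ)) * ε' + ε' := by ring
    rw [hcc] at hsumc
    linarith [hexp, hsumc, hS', hsplit]
  have hε0 : (0:ℝ) ≤ ε := keyA 0 hbal
  -- construct an element of the ε-core
  have keyB : (epsCore v ε).Nonempty := by
    refine ⟨fun i => if i = a then v Finset.univ - ((n:ℝ) - 1) * ε else ε, ?_, ?_⟩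
    · have h := Finset.add_sum_erase Finset.univ
        (fun i => if i = a then v Finset.univ - ((n:ℝ) - 1) * ε else ε) (Finset.mem_univ a)
      rw [← h]
      have : ∑ i ∈ Finset.univ.erase a,
          (if i = a then v Finset.univ - ((n:ℝ) - 1) * ε else ε) = ((n:ℝ) - 1) * ε := by
        rw [Finset.sum_congr rfl (fun i hi => if_neg (Finset.ne_of_mem_erase hi))]
        rw [Finset.sum_const, nsmul_eq_mul, Finset.card_erase_of_mem (Finset.mem_univ a),
          Finset.card_univ, ← hn]
        push_cast [Nat.cast_sub (by omega : 1 ≤ n)]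
        ring
      rw [this]
      simp
    · intro S hSnon hSne
      by_cases haS : a ∈ S
      · have hSPa : S ∈ Pa a := by rw [Pa, mem_filter]; exact ⟨Finset.mem_univ S, haS, hSne⟩
        have hle : ε ≤ excessRatio v S := Finset.inf'_le _ hSPa
        have hcardS : S.card < n := by
          have : S ⊂ Finset.univ := Finset.ssubset_univ_iff.mpr hSne
          simpa [hn] using Finset.card_lt_card this
        have hd : (0:ℝ) < (n:ℝ) - (S.card:ℝ) + 1 := by
          have : (S.card : ℝ) < (n : ℝ) := by exact_mod_cast hcardS
          linarith
        have hkey : ε * ((n:ℝ) - (S.card:ℝ) + 1) ≤ v Finset.univ - v S := by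
          rw [excessRatio] at hle
          exact (le_div_iff₀ hd).mp hle
        have hsum : ∑ i ∈ S, (if i = a then v Finset.univ - ((n:ℝ) - 1) * ε else ε)
            = v Finset.univ - ((n:ℝ) - (S.card:ℝ)) * ε := by
          rw [← Finset.add_sum_erase S _ haS, if_pos rfl]
          rw [Finset.sum_congr rfl (fun i hi => if_neg (Finset.ne_of_mem_erase hi))]
          rw [Finset.sum_const, nsmul_eq_mul, Finset.card_erase_of_mem haS]
          have h1 : 1 ≤ S.card := Finset.card_pos.mpr hSnon
          push_cast [Nat.cast_sub h1]
          ring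
        rw [hsum]
        nlinarith [hkey]
      · have hvS : v S = 0 := hveto S haS
        have hsum : ∑ i ∈ S, (if i = a then v Finset.univ - ((n:ℝ) - 1) * ε else ε)
            = (S.card : ℝ) * ε := by
          rw [Finset.sum_congr rfl (fun i hi => if_neg (fun h => haS (by rw [← h]; exact hi)))]
          rw [Finset.sum_const, nsmul_eq_mul]
        rw [hsum, hvS]
        have h1 : (1:ℝ) ≤ (S.card : ℝ) := by
          exact_mod_cast Finset.card_pos.mpr hSnon
        nlinarith [hε0]
  -- conclude
  have hmem : ε ∈ {ε' : ℝ | (epsCore v ε').Nonempty} := keyB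
  have hub : ∀ b ∈ {ε' : ℝ | (epsCore v ε').Nonempty}, b ≤ ε := fun b hb => keyA b hb
  rw [lcv]
  exact le_antisymm (csSup_le ⟨ε, hmem⟩ hub) (le_csSup ⟨ε, hub⟩ hmem)
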